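/- Fix a positive integer n. The sum over all partitions λ of n into distinct parts, and over all odd numbers x, of max(0, c_x(λ) − 1), where c_x(λ) is the number of parts of λ of the form x·2^j, equals the number of partitions of n in which exactly one part appears three times and all other parts appear once. -/

import Mathlib

open Multiset Finset
open scoped Classical

namespace ChainAux

/-- odd part of a natural number -/
def op (z : ℕ) : ℕ := ordCompl[2] z
/-- 2-adic valuation -/
def ex (z : ℕ) : ℕ := z.factorization 2

lemma op_mul_pow (z : ℕ) : op z * 2 ^ ex z = z := by
  rw [mul_comm]; exact Nat.ordProj_mul_ordCompl_eq_self z 2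

lemma op_pos {z : ℕ} (hz : 0 < z) : 0 < op z := Nat.ordCompl_pos 2 hz.ne'

lemma op_odd {z : ℕ} (hz : 0 < z) : Odd (op z) := by
  have h := Nat.not_dvd_ordCompl Nat.prime_two hz.ne'
  rcases Nat.even_or_odd (op z) with he | ho
  · exact absurd he.two_dvd h
  · exact ho

lemma ex_of_odd {x : ℕ} (hx : Odd x) (j : ℕ) : ex (x * 2 ^ j) = j := by
  have hx0 : x ≠ 0 := by rintro rfl; simp [Nat.odd_iff] at hx
  unfold ex
  rw [Nat.factorization_mul hx0 (by positivity)]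
  simp [Nat.Prime.factorization_pow Nat.prime_two,
    Nat.factorization_eq_zero_of_not_dvd hx.not_two_dvd_nat]

lemma op_of_odd {x : ℕ} (hx : Odd x) (j : ℕ) : op (x * 2 ^ j) = x := by
  have hx0 : x ≠ 0 := by rintro rfl; simp [Nat.odd_iff] at hx
  unfold op
  rw [show (x * 2 ^ j).factorization 2 = j from ex_of_odd hx j]
  exact Nat.mul_div_cancel x (by positivity)

lemma chain_iff {x y : ℕ} (hx : Odd x) (hy : 0 < y) :
    (∃ j, y = x * 2 ^ j) ↔ op y = x :=
  ⟨fun ⟨j, hj⟩ => hj ▸ op_of_odd hx j, fun h => ⟨ex y, by rw [← h, op_mul_pow]⟩⟩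

lemma chain_lt {x : ℕ} (hx : 0 < x) {i j : ℕ} : x * 2 ^ i < x * 2 ^ j ↔ i < j := by
  rw [Nat.mul_lt_mul_left hx, Nat.pow_lt_pow_iff_right (by norm_num)]

lemma chain_inj {x : ℕ} (hx : 0 < x) {i j : ℕ} : x * 2 ^ i = x * 2 ^ j ↔ i = j := by
  constructor
  · intro h
    rcases lt_trichotomy i j with h' | h' | h'
    · exact absurd h (by have := (chain_lt hx).2 h'; omega)
    · exact h'
    · exact absurd h (by have := (chain_lt hx).2 h'; omega)
  · rintro rfl; rfl

lemma two_pow_sum {a b : ℕ} (h : a ≤ b) :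
    (∑ j ∈ Finset.Ico a b, 2 ^ j) + 2 ^ a = 2 ^ b := by
  induction b, h using Nat.le_induction with
  | base => simp
  | succ b hb ih =>
    rw [Finset.sum_Ico_succ_top hb]
    rw [pow_succ]
    omega


/-- the multiset of chain elements x*2^j for a < j < b -/
def seg (x a b : ℕ) : Multiset ℕ := (Finset.Ioo a b).val.map fun j => x * 2 ^ j

lemma mem_seg {x a b u : ℕ} : u ∈ seg x a b ↔ ∃ j, a < j ∧ j < b ∧ u = x * 2 ^ j := by
  simp only [seg, Multiset.mem_map, Finset.mem_val, Finset.mem_Ioo]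
  constructor
  · rintro ⟨j, ⟨h1, h2⟩, rfl⟩; exact ⟨j, h1, h2, rfl⟩
  · rintro ⟨j, h1, h2, rfl⟩; exact ⟨j, ⟨h1, h2⟩, rfl⟩

lemma seg_nodup {x a b : ℕ} (hx : 0 < x) : (seg x a b).Nodup :=
  Multiset.Nodup.map (fun i j h => (chain_inj hx).1 h) (Finset.Ioo a b).nodup

lemma count_seg_le {x a b u : ℕ} (hx : 0 < x) : count u (seg x a b) ≤ 1 :=
  Multiset.nodup_iff_count_le_one.1 (seg_nodup hx) u

lemma count_seg_of_not_mem {x a b u : ℕ} (h : u ∉ seg x a b) : count u (seg x a b) = 0 :=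
  Multiset.count_eq_zero.2 h

lemma seg_sum {x a b : ℕ} (h : a < b) :
    x * 2 ^ a + (x * 2 ^ a + (seg x a b).sum) = x * 2 ^ b := by
  have hsum : (seg x a b).sum = ∑ j ∈ Finset.Ioo a b, x * 2 ^ j := rfl
  rw [hsum, ← Finset.Ico_add_one_left_eq_Ioo, ← Finset.mul_sum]
  have h2 : (∑ j ∈ Finset.Ico (a + 1) b, 2 ^ j) + 2 ^ (a + 1) = 2 ^ b := two_pow_sum h
  have : x * 2 ^ a + (x * 2 ^ a + x * ∑ j ∈ Finset.Ico (a + 1) b, 2 ^ j)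
      = x * ((∑ j ∈ Finset.Ico (a + 1) b, 2 ^ j) + 2 ^ (a + 1)) := by ring
  rw [this, h2]

/-- the multiset removed/added in the bijection: two copies of z plus the chain segment -/
def Dm (z m : ℕ) : Multiset ℕ := z ::ₘ z ::ₘ seg (op z) (ex z) m

lemma z_not_mem_seg {z m : ℕ} (hz : 0 < z) : z ∉ seg (op z) (ex z) m := by
  intro h
  obtain ⟨j, hj1, _, hj3⟩ := mem_seg.1 h
  have hz2 : op z * 2 ^ ex z = op z * 2 ^ j := by rw [op_mul_pow]; exact hj3
  have := (chain_inj (op_pos hz)).1 hz2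
  omega

lemma count_Dm_self {z m : ℕ} (hz : 0 < z) : count z (Dm z m) = 2 := by
  simp [Dm, Multiset.count_cons_self, count_seg_of_not_mem (z_not_mem_seg hz)]

lemma count_Dm_ne {z m u : ℕ} (hu : u ≠ z) :
    count u (Dm z m) = count u (seg (op z) (ex z) m) := by
  simp [Dm, Multiset.count_cons_of_ne hu]

lemma Dm_sum {z m : ℕ} (hz : 0 < z) (hm : ex z < m) :
    (Dm z m).sum = op z * 2 ^ m := by
  have := seg_sum (x := op z) hm
  simp only [Dm, Multiset.sum_cons]
  rw [← this]
  rw [op_mul_pow]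


lemma ne_w {z m : ℕ} (hz0 : 0 < z) (hkm : ex z < m) : z ≠ op z * 2 ^ m := by
  intro h
  have h2 : op z * 2 ^ ex z = op z * 2 ^ m := by rw [op_mul_pow]; exact h
  have := (chain_inj (op_pos hz0)).1 h2
  omega

lemma mid_ne_z {z j : ℕ} (hz0 : 0 < z) (hj : ex z < j) : op z * 2 ^ j ≠ z := by
  intro h
  have h2 : op z * 2 ^ j = op z * 2 ^ ex z := by rw [op_mul_pow]; exact h
  have := (chain_inj (op_pos hz0)).1 h2
  omega

lemma w_not_mem_seg {z m : ℕ} (hz0 : 0 < z) : op z * 2 ^ m ∉ seg (op z) (ex z) m := by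
  intro h
  obtain ⟨j, _, hj2, hj3⟩ := mem_seg.1 h
  have := (chain_inj (op_pos hz0)).1 hj3
  omega

/-- forward map on part multisets -/
def Fm (s : Multiset ℕ) (z m : ℕ) : Multiset ℕ := Dm z m + s.erase (op z * 2 ^ m)

section Fside
variable {s : Multiset ℕ} {z m : ℕ}

lemma F_count_z (hd : s.Nodup) (hz : z ∈ s) (hz0 : 0 < z) (hkm : ex z < m) :
    count z (Fm s z m) = 3 := by
  rw [Fm, Multiset.count_add, count_Dm_self hz0,
    Multiset.count_erase_of_ne (ne_w hz0 hkm),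
    Multiset.count_eq_one_of_mem hd hz]

lemma F_count_ne (hd : s.Nodup) (hz0 : 0 < z)
    (hmin : ∀ j, ex z < j → j < m → op z * 2 ^ j ∉ s) :
    ∀ u, u ≠ z → count u (Fm s z m) ≤ 1 := by
  intro u hu
  rw [Fm, Multiset.count_add, count_Dm_ne hu]
  have herase : count u (s.erase (op z * 2 ^ m)) ≤ count u s :=
    Multiset.count_le_of_le u (Multiset.erase_le _ _)
  by_cases hus : u ∈ seg (op z) (ex z) m
  · obtain ⟨j, hj1, hj2, rfl⟩ := mem_seg.1 hus
    have : op z * 2 ^ j ∉ s := hmin j hj1 hj2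
    have h0 : count (op z * 2 ^ j) s = 0 := Multiset.count_eq_zero.2 this
    have := count_seg_le (a := ex z) (b := m) (u := op z * 2 ^ j) (op_pos hz0)
    omega
  · rw [count_seg_of_not_mem hus]
    have := Multiset.nodup_iff_count_le_one.1 hd u
    omega

lemma F_count_w (hd : s.Nodup) (hz0 : 0 < z) (hkm : ex z < m) :
    count (op z * 2 ^ m) (Fm s z m) = 0 := by
  rw [Fm, Multiset.count_add, count_Dm_ne (ne_w hz0 hkm).symm,
    count_seg_of_not_mem (w_not_mem_seg hz0), Multiset.count_erase_self]
  have := Multiset.nodup_iff_count_le_one.1 hd (op z * 2 ^ m)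
  omega

lemma F_mem_mid (j : ℕ) (hj1 : ex z < j) (hj2 : j < m) :
    op z * 2 ^ j ∈ Fm s z m := by
  rw [Fm, Multiset.mem_add]
  left
  rw [Dm]
  simp only [Multiset.mem_cons]
  right; right
  exact mem_seg.2 ⟨j, hj1, hj2, rfl⟩

lemma F_sum (hz0 : 0 < z) (hkm : ex z < m) (hmem : op z * 2 ^ m ∈ s) :
    (Fm s z m).sum = s.sum := by
  rw [Fm, Multiset.sum_add, Dm_sum hz0 hkm]
  conv_rhs => rw [← Multiset.cons_erase hmem]
  rw [Multiset.sum_cons]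

lemma F_pos (hpos : ∀ u ∈ s, 0 < u) (hz0 : 0 < z) :
    ∀ u ∈ Fm s z m, 0 < u := by
  intro u hu
  rw [Fm, Multiset.mem_add] at hu
  rcases hu with hu | hu
  · rw [Dm] at hu
    simp only [Multiset.mem_cons] at hu
    rcases hu with rfl | rfl | hu
    · exact hz0
    · exact hz0
    · obtain ⟨j, _, _, rfl⟩ := mem_seg.1 hu
      exact Nat.mul_pos (op_pos hz0) (pow_pos (by norm_num) j)
  · exact hpos u (Multiset.mem_of_mem_erase hu)

lemma F_recover (hmem : op z * 2 ^ m ∈ s) :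
    (op z * 2 ^ m) ::ₘ (Fm s z m - Dm z m) = s := by
  rw [Fm, add_tsub_cancel_left, Multiset.cons_erase hmem]

end Fside


/-- inverse map on part multisets -/
def Gm (mu : Multiset ℕ) (y m : ℕ) : Multiset ℕ := (op y * 2 ^ m) ::ₘ (mu - Dm y m)

section Gside
variable {mu : Multiset ℕ} {y m : ℕ}

lemma mid_ne_y {j : ℕ} (hy0 : 0 < y) (hj : ex y < j) : op y * 2 ^ j ≠ y :=
  mid_ne_z hy0 hj

lemma G_D_le (hy3 : count y mu = 3) (hy0 : 0 < y)
    (hmid : ∀ j, ex y < j → j < m → op y * 2 ^ j ∈ mu) :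
    Dm y m ≤ mu := by
  rw [Multiset.le_iff_count]
  intro u
  by_cases hu : u = y
  · subst hu; rw [count_Dm_self hy0, hy3]; omega
  · rw [count_Dm_ne hu]
    by_cases hus : u ∈ seg (op y) (ex y) m
    · obtain ⟨j, hj1, hj2, rfl⟩ := mem_seg.1 hus
      have hmem := hmid j hj1 hj2
      have h1 : 1 ≤ count (op y * 2 ^ j) mu := Multiset.one_le_count_iff_mem.2 hmem
      have := count_seg_le (a := ex y) (b := m) (u := op y * 2 ^ j) (op_pos hy0)
      omega
    · rw [count_seg_of_not_mem hus]; omega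

lemma G_count_y (hy3 : count y mu = 3) (hy0 : 0 < y) (hkm : ex y < m) :
    count y (Gm mu y m) = 1 := by
  rw [Gm, Multiset.count_cons_of_ne (ne_w hy0 hkm), Multiset.count_sub, hy3,
    count_Dm_self hy0]

lemma G_count_w (hnot : op y * 2 ^ m ∉ mu) :
    count (op y * 2 ^ m) (Gm mu y m) = 1 := by
  rw [Gm, Multiset.count_cons_self, Multiset.count_sub,
    Multiset.count_eq_zero.2 hnot]
  omega

lemma G_count_mid (h1 : ∀ u ∈ mu, u ≠ y → count u mu = 1) (hy0 : 0 < y)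
    (hmid : ∀ j, ex y < j → j < m → op y * 2 ^ j ∈ mu) :
    ∀ j, ex y < j → j < m → count (op y * 2 ^ j) (Gm mu y m) = 0 := by
  intro j hj1 hj2
  have hne : op y * 2 ^ j ≠ op y * 2 ^ m := by
    intro h; have := (chain_inj (op_pos hy0)).1 h; omega
  rw [Gm, Multiset.count_cons_of_ne hne, Multiset.count_sub,
    count_Dm_ne (mid_ne_y hy0 hj1),
    h1 _ (hmid j hj1 hj2) (mid_ne_y hy0 hj1),
    Multiset.count_eq_one_of_mem (seg_nodup (op_pos hy0)) (mem_seg.2 ⟨j, hj1, hj2, rfl⟩)]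

lemma G_count_other (h1 : ∀ u ∈ mu, u ≠ y → count u mu = 1)
    {u : ℕ} (huy : u ≠ y) (huw : u ≠ op y * 2 ^ m)
    (hus : u ∉ seg (op y) (ex y) m) :
    count u (Gm mu y m) = count u mu := by
  rw [Gm, Multiset.count_cons_of_ne huw, Multiset.count_sub, count_Dm_ne huy,
    count_seg_of_not_mem hus]
  omega

lemma G_nodup (hy3 : count y mu = 3) (h1 : ∀ u ∈ mu, u ≠ y → count u mu = 1)
    (hy0 : 0 < y) (hkm : ex y < m) (hnot : op y * 2 ^ m ∉ mu)
    (hmid : ∀ j, ex y < j → j < m → op y * 2 ^ j ∈ mu) :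
    (Gm mu y m).Nodup := by
  rw [Multiset.nodup_iff_count_le_one]
  intro u
  by_cases huy : u = y
  · subst huy; rw [G_count_y hy3 hy0 hkm]
  · by_cases huw : u = op y * 2 ^ m
    · subst huw; rw [G_count_w hnot]
    · by_cases hus : u ∈ seg (op y) (ex y) m
      · obtain ⟨j, hj1, hj2, rfl⟩ := mem_seg.1 hus
        rw [G_count_mid h1 hy0 hmid j hj1 hj2]; omega
      · rw [G_count_other h1 huy huw hus]
        by_cases hum : u ∈ mu
        · rw [h1 u hum huy]
        · rw [Multiset.count_eq_zero.2 hum]; omega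

lemma G_pos (hpos : ∀ u ∈ mu, 0 < u) (hy0 : 0 < y) :
    ∀ u ∈ Gm mu y m, 0 < u := by
  intro u hu
  rw [Gm, Multiset.mem_cons] at hu
  rcases hu with rfl | hu
  · exact Nat.mul_pos (op_pos hy0) (pow_pos (by norm_num) m)
  · exact hpos u (Multiset.mem_of_le tsub_le_self hu)

lemma G_sum (hy3 : count y mu = 3) (hy0 : 0 < y) (hkm : ex y < m)
    (hmid : ∀ j, ex y < j → j < m → op y * 2 ^ j ∈ mu) :
    (Gm mu y m).sum = mu.sum := by
  have hle := G_D_le hy3 hy0 hmid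
  have h : (mu - Dm y m) + Dm y m = mu := tsub_add_cancel_of_le hle
  have hsum : (mu - Dm y m).sum + (Dm y m).sum = mu.sum := by
    rw [← Multiset.sum_add, h]
  rw [Gm, Multiset.sum_cons, ← Dm_sum hy0 hkm]
  omega

lemma G_mem_y (hy3 : count y mu = 3) (hy0 : 0 < y) (hkm : ex y < m) :
    y ∈ Gm mu y m := by
  rw [← Multiset.count_pos, G_count_y hy3 hy0 hkm]; omega

lemma G_mem_w : op y * 2 ^ m ∈ Gm mu y m := Multiset.mem_cons_self _ _

lemma G_not_mem_mid (h1 : ∀ u ∈ mu, u ≠ y → count u mu = 1) (hy0 : 0 < y)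
    (hmid : ∀ j, ex y < j → j < m → op y * 2 ^ j ∈ mu) :
    ∀ j, ex y < j → j < m → op y * 2 ^ j ∉ Gm mu y m := by
  intro j hj1 hj2
  rw [← Multiset.count_eq_zero]
  exact G_count_mid h1 hy0 hmid j hj1 hj2

lemma G_recover (hy3 : count y mu = 3) (hy0 : 0 < y)
    (hmid : ∀ j, ex y < j → j < m → op y * 2 ^ j ∈ mu) :
    Fm (Gm mu y m) y m = mu := by
  rw [Fm, Gm, Multiset.erase_cons_head]
  exact add_tsub_cancel_of_le (G_D_le hy3 hy0 hmid)

end Gside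


lemma card_nonmax (t : Finset ℕ) :
    (t.filter fun z => ∃ w ∈ t, z < w).card = t.card - 1 := by
  rcases t.eq_empty_or_nonempty with rfl | h
  · simp
  · have heq : (t.filter fun z => ∃ w ∈ t, z < w) = t.erase (t.max' h) := by
      ext z
      simp only [Finset.mem_filter, Finset.mem_erase]
      constructor
      · rintro ⟨hz, w, hw, hzw⟩
        refine ⟨fun hzm => ?_, hz⟩
        have := Finset.le_max' t w hw
        omega
      · rintro ⟨hne, hz⟩
        refine ⟨hz, t.max' h, t.max'_mem h, ?_⟩
        have := Finset.le_max' t z hz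
        omega
    rw [heq, Finset.card_erase_of_mem (t.max'_mem h)]

lemma inner_sum (n : ℕ) (p : n.Partition) (hd : p.parts.Nodup) :
    ∑ x ∈ (Finset.range (n + 1)).filter (fun x => Odd x),
        (Multiset.card (p.parts.filter fun y => ∃ j : ℕ, y = x * 2 ^ j) - 1) =
    (p.parts.toFinset.filter fun z => ∃ w ∈ p.parts, z < w ∧ op w = op z).card := by
  set t := p.parts.toFinset with ht
  have hval : t.val = p.parts := by
    rw [ht, Multiset.toFinset_val, Multiset.dedup_eq_self.2 hd]
  have hmemt : ∀ z, z ∈ t ↔ z ∈ p.parts := fun z => Multiset.mem_toFinset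
  -- rewrite each term as a filter card on t
  have hterm : ∀ x : ℕ,
      Multiset.card (p.parts.filter fun y => ∃ j : ℕ, y = x * 2 ^ j) - 1 =
      (t.filter fun z => (∃ j : ℕ, z = x * 2 ^ j) ∧
        ∃ w ∈ p.parts, (∃ j : ℕ, w = x * 2 ^ j) ∧ z < w).card := by
    intro x
    have h1 : Multiset.card (p.parts.filter fun y => ∃ j : ℕ, y = x * 2 ^ j) =
        (t.filter fun y => ∃ j : ℕ, y = x * 2 ^ j).card := by
      rw [Finset.card_def, Finset.filter_val, hval]
    rw [h1, ← card_nonmax (t.filter fun y => ∃ j : ℕ, y = x * 2 ^ j),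
      Finset.filter_filter]
    congr 1
    apply Finset.filter_congr
    intro z hz
    simp only [Finset.mem_filter, hmemt]
    constructor
    · rintro ⟨hc, w, ⟨hw1, hw2⟩, hzw⟩
      exact ⟨hc, w, hw1, hw2, hzw⟩
    · rintro ⟨hc, w, hw1, hw2, hzw⟩
      exact ⟨hc, w, ⟨hw1, hw2⟩, hzw⟩
  calc ∑ x ∈ (Finset.range (n + 1)).filter (fun x => Odd x),
        (Multiset.card (p.parts.filter fun y => ∃ j : ℕ, y = x * 2 ^ j) - 1)
      = ∑ x ∈ (Finset.range (n + 1)).filter (fun x => Odd x),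
          ∑ z ∈ t, (if (∃ j : ℕ, z = x * 2 ^ j) ∧
            ∃ w ∈ p.parts, (∃ j : ℕ, w = x * 2 ^ j) ∧ z < w then 1 else 0) := by
        refine Finset.sum_congr rfl fun x _ => ?_
        rw [hterm x, Finset.card_filter]
    _ = ∑ z ∈ t, ∑ x ∈ (Finset.range (n + 1)).filter (fun x => Odd x),
          (if (∃ j : ℕ, z = x * 2 ^ j) ∧
            ∃ w ∈ p.parts, (∃ j : ℕ, w = x * 2 ^ j) ∧ z < w then 1 else 0) :=
        Finset.sum_comm
    _ = ∑ z ∈ t, (if ∃ w ∈ p.parts, z < w ∧ op w = op z then 1 else 0) := by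
        refine Finset.sum_congr rfl fun z hz => ?_
        have hzp : z ∈ p.parts := (hmemt z).1 hz
        have hz0 : 0 < z := p.parts_pos hzp
        have hzn : z ≤ n := by
          have := Multiset.single_le_sum (fun u _ => Nat.zero_le u) z hzp
          rw [p.parts_sum] at this; omega
        by_cases hQ : ∃ w ∈ p.parts, z < w ∧ op w = op z
        · rw [if_pos hQ, ← Finset.card_filter]
          have hsing : ((Finset.range (n + 1)).filter (fun x => Odd x)).filter
              (fun x => (∃ j : ℕ, z = x * 2 ^ j) ∧
                ∃ w ∈ p.parts, (∃ j : ℕ, w = x * 2 ^ j) ∧ z < w) = {op z} := by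
            ext x
            simp only [Finset.mem_filter, Finset.mem_range, Finset.mem_singleton]
            constructor
            · rintro ⟨⟨hxn, hxodd⟩, hcz, -⟩
              exact ((chain_iff hxodd hz0).1 hcz).symm
            · rintro rfl
              obtain ⟨w, hwp, hzw, hopw⟩ := hQ
              have hw0 : 0 < w := p.parts_pos hwp
              refine ⟨⟨?_, op_odd hz0⟩, ?_, w, hwp, ?_, hzw⟩
              · have : op z ≤ z := Nat.div_le_self _ _
                omega
              · exact (chain_iff (op_odd hz0) hz0).2 rfl
              · exact (chain_iff (op_odd hz0) hw0).2 hopw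
          rw [hsing, Finset.card_singleton]
        · rw [if_neg hQ, ← Finset.card_filter]
          convert Finset.card_empty
          ext x
          simp only [Finset.mem_filter, Finset.mem_range, Finset.notMem_empty,
            iff_false, not_and]
          rintro ⟨hxn, hxodd⟩ hcz ⟨w, hwp, hcw, hzw⟩
          have hw0 : 0 < w := p.parts_pos hwp
          exact hQ ⟨w, hwp, hzw, by
            rw [(chain_iff hxodd hw0).1 hcw, (chain_iff hxodd hz0).1 hcz]⟩
    _ = (t.filter fun z => ∃ w ∈ p.parts, z < w ∧ op w = op z).card := by
        rw [Finset.card_filter]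


lemma ffind_exists (n : ℕ) (p : n.Partition) {z : ℕ} (hz : z ∈ p.parts)
    (hw : ∃ w ∈ p.parts, z < w ∧ op w = op z) :
    ∃ m, ex z < m ∧ op z * 2 ^ m ∈ p.parts := by
  obtain ⟨w, hwp, hzw, hop⟩ := hw
  have hz0 : 0 < z := p.parts_pos hz
  have hwz : op z * 2 ^ ex w = w := by rw [← hop, op_mul_pow]
  refine ⟨ex w, ?_, by rw [hwz]; exact hwp⟩
  have h1 : op z * 2 ^ ex z < op z * 2 ^ ex w := by
    rw [op_mul_pow, hwz]; exact hzw
  exact (chain_lt (op_pos hz0)).1 h1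

lemma gfind_exists (mu : Multiset ℕ) {y : ℕ} (hy0 : 0 < y) :
    ∃ m, ex y < m ∧ op y * 2 ^ m ∉ mu := by
  refine ⟨ex y + mu.sum + 1, by omega, fun hmem => ?_⟩
  have h1 : op y * 2 ^ (ex y + mu.sum + 1) ≤ mu.sum :=
    Multiset.single_le_sum (fun u _ => Nat.zero_le u) _ hmem
  have h2 : mu.sum < 2 ^ (ex y + mu.sum + 1) := by
    calc mu.sum < ex y + mu.sum + 1 := by omega
    _ < 2 ^ (ex y + mu.sum + 1) := Nat.lt_two_pow_self
  have h3 : 2 ^ (ex y + mu.sum + 1) ≤ op y * 2 ^ (ex y + mu.sum + 1) :=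
    Nat.le_mul_of_pos_left _ (op_pos hy0)
  omega

/-- the forward map, as a map on partitions -/
noncomputable def Fpart (n : ℕ) (p : n.Partition) (z : ℕ) (hz : z ∈ p.parts)
    (hw : ∃ w ∈ p.parts, z < w ∧ op w = op z) : n.Partition where
  parts := Fm p.parts z (Nat.find (ffind_exists n p hz hw))
  parts_pos := fun hu =>
    F_pos (fun u hu' => p.parts_pos hu') (p.parts_pos hz) _ hu
  parts_sum := by
    rw [F_sum (p.parts_pos hz) (Nat.find_spec (ffind_exists n p hz hw)).1
      (Nat.find_spec (ffind_exists n p hz hw)).2, p.parts_sum]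

lemma Fpart_parts (n : ℕ) (p : n.Partition) (z : ℕ) (hz : z ∈ p.parts)
    (hw : ∃ w ∈ p.parts, z < w ∧ op w = op z) :
    (Fpart n p z hz hw).parts = Fm p.parts z (Nat.find (ffind_exists n p hz hw)) := rfl

lemma mem_distincts_iff {n : ℕ} {p : n.Partition} :
    p ∈ Nat.Partition.distincts n ↔ p.parts.Nodup := by
  simp [Nat.Partition.distincts, Finset.mem_filter]

end ChainAux

open ChainAux in
open scoped Classical in
theorem chain_excess_sum_eq_one_part_thrice (n : ℕ) (hn : 0 < n) :
    (∑ p ∈ Nat.Partition.distincts n,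
        ∑ x ∈ (Finset.range (n + 1)).filter (fun x => Odd x),
          (Multiset.card (p.parts.filter fun y => ∃ j : ℕ, y = x * 2 ^ j) - 1)) =
      (Finset.univ.filter fun p : n.Partition =>
        ∃ x ∈ p.parts, p.parts.count x = 3 ∧
          ∀ y ∈ p.parts, y ≠ x → p.parts.count y = 1).card := by
  classical
  have hstep1 : (∑ p ∈ Nat.Partition.distincts n,
      ∑ x ∈ (Finset.range (n + 1)).filter (fun x => Odd x),
        (Multiset.card (p.parts.filter fun y => ∃ j : ℕ, y = x * 2 ^ j) - 1)) =
      ((Nat.Partition.distincts n).sigma fun p =>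
        p.parts.toFinset.filter fun z => ∃ w ∈ p.parts, z < w ∧ op w = op z).card := by
    rw [Finset.card_sigma]
    exact Finset.sum_congr rfl fun p hp => inner_sum n p (mem_distincts_iff.1 hp)
  rw [hstep1]
  refine Finset.card_bij
    (fun a ha => Fpart n a.1 a.2
      (Multiset.mem_toFinset.1 (Finset.mem_filter.1 (Finset.mem_sigma.1 ha).2).1)
      (Finset.mem_filter.1 (Finset.mem_sigma.1 ha).2).2) ?_ ?_ ?_
  · -- maps into the target
    rintro ⟨p, z⟩ ha
    obtain ⟨hps, hzf⟩ := Finset.mem_sigma.1 ha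
    have hd : p.parts.Nodup := mem_distincts_iff.1 hps
    have hz : z ∈ p.parts := Multiset.mem_toFinset.1 (Finset.mem_filter.1 hzf).1
    have hw : ∃ w ∈ p.parts, z < w ∧ op w = op z := (Finset.mem_filter.1 hzf).2
    have hz0 : 0 < z := p.parts_pos hz
    set m := Nat.find (ffind_exists n p hz hw) with hm
    have hkm : ex z < m := (Nat.find_spec (ffind_exists n p hz hw)).1
    have hmin : ∀ j, ex z < j → j < m → op z * 2 ^ j ∉ p.parts := by
      intro j hj1 hj2 hc
      exact Nat.find_min (ffind_exists n p hz hw) hj2 ⟨hj1, hc⟩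
    rw [Finset.mem_filter]
    refine ⟨Finset.mem_univ _, z, ?_, ?_, ?_⟩
    · rw [← Multiset.count_pos, Fpart_parts, ← hm, F_count_z hd hz hz0 hkm]
      omega
    · rw [Fpart_parts, ← hm, F_count_z hd hz hz0 hkm]
    · intro u hu hune
      have hle := F_count_ne (s := p.parts) (m := m) hd hz0 hmin u hune
      have hge : 1 ≤ Multiset.count u (Fm p.parts z m) := by
        rw [Multiset.one_le_count_iff_mem]
        rw [Fpart_parts, ← hm] at hu
        exact hu
      rw [Fpart_parts]
      show Multiset.count u (Fm p.parts z m) = 1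
      omega
  · -- injectivity
    rintro ⟨p₁, z₁⟩ ha₁ ⟨p₂, z₂⟩ ha₂ heq
    obtain ⟨hps₁, hzf₁⟩ := Finset.mem_sigma.1 ha₁
    obtain ⟨hps₂, hzf₂⟩ := Finset.mem_sigma.1 ha₂
    have hd₁ : p₁.parts.Nodup := mem_distincts_iff.1 hps₁
    have hd₂ : p₂.parts.Nodup := mem_distincts_iff.1 hps₂
    have hz₁ : z₁ ∈ p₁.parts := Multiset.mem_toFinset.1 (Finset.mem_filter.1 hzf₁).1
    have hz₂ : z₂ ∈ p₂.parts := Multiset.mem_toFinset.1 (Finset.mem_filter.1 hzf₂).1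
    have hw₁ : ∃ w ∈ p₁.parts, z₁ < w ∧ op w = op z₁ := (Finset.mem_filter.1 hzf₁).2
    have hw₂ : ∃ w ∈ p₂.parts, z₂ < w ∧ op w = op z₂ := (Finset.mem_filter.1 hzf₂).2
    have hz0₁ : 0 < z₁ := p₁.parts_pos hz₁
    have hz0₂ : 0 < z₂ := p₂.parts_pos hz₂
    set m₁ := Nat.find (ffind_exists n p₁ hz₁ hw₁) with hm₁
    set m₂ := Nat.find (ffind_exists n p₂ hz₂ hw₂) with hm₂
    have hkm₁ : ex z₁ < m₁ := (Nat.find_spec (ffind_exists n p₁ hz₁ hw₁)).1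
    have hkm₂ : ex z₂ < m₂ := (Nat.find_spec (ffind_exists n p₂ hz₂ hw₂)).1
    have hmem₁ : op z₁ * 2 ^ m₁ ∈ p₁.parts := (Nat.find_spec (ffind_exists n p₁ hz₁ hw₁)).2
    have hmem₂ : op z₂ * 2 ^ m₂ ∈ p₂.parts := (Nat.find_spec (ffind_exists n p₂ hz₂ hw₂)).2
    have hmin₁ : ∀ j, ex z₁ < j → j < m₁ → op z₁ * 2 ^ j ∉ p₁.parts := fun j hj1 hj2 hc =>
      Nat.find_min (ffind_exists n p₁ hz₁ hw₁) hj2 ⟨hj1, hc⟩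
    have hmin₂ : ∀ j, ex z₂ < j → j < m₂ → op z₂ * 2 ^ j ∉ p₂.parts := fun j hj1 hj2 hc =>
      Nat.find_min (ffind_exists n p₂ hz₂ hw₂) hj2 ⟨hj1, hc⟩
    have hparts : Fm p₁.parts z₁ m₁ = Fm p₂.parts z₂ m₂ := by
      have := congrArg Nat.Partition.parts heq
      rwa [Fpart_parts, Fpart_parts, ← hm₁, ← hm₂] at this
    -- z₁ = z₂
    have hzz : z₂ = z₁ := by
      by_contra hne
      have h3 : Multiset.count z₂ (Fm p₁.parts z₁ m₁) = 3 := by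
        rw [hparts]; exact F_count_z hd₂ hz₂ hz0₂ hkm₂
      have hle := F_count_ne (s := p₁.parts) (m := m₁) hd₁ hz0₁ hmin₁ z₂ hne
      omega
    subst hzz
    -- m₁ = m₂
    have hmm : m₁ = m₂ := by
      rcases lt_trichotomy m₁ m₂ with h | h | h
      · exfalso
        have hmem' : op z₂ * 2 ^ m₁ ∈ Fm p₂.parts z₂ m₂ := F_mem_mid m₁ hkm₁ h
        rw [← hparts] at hmem'
        have := F_count_w (s := p₁.parts) (m := m₁) hd₁ hz0₁ hkm₁
        rw [← Multiset.count_pos] at hmem'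
        omega
      · exact h
      · exfalso
        have hmem' : op z₂ * 2 ^ m₂ ∈ Fm p₁.parts z₂ m₁ := F_mem_mid m₂ hkm₂ h
        rw [hparts] at hmem'
        have := F_count_w (s := p₂.parts) (m := m₂) hd₂ hz0₂ hkm₂
        rw [← Multiset.count_pos] at hmem'
        omega
    -- p₁ = p₂
    have hpp : p₁ = p₂ := by
      apply Nat.Partition.ext
      have h1 := F_recover (s := p₁.parts) (z := z₂) hmem₁
      have h2 := F_recover (s := p₂.parts) (z := z₂) hmem₂
      rw [← h1, ← h2, hparts, hmm]
    subst hpp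
    rfl
  · -- surjectivity
    intro q hq
    obtain ⟨-, y, hymem, hy3, h1⟩ := Finset.mem_filter.1 hq
    have hy0 : 0 < y := q.parts_pos hymem
    set m := Nat.find (gfind_exists q.parts hy0) with hm
    have hkm : ex y < m := (Nat.find_spec (gfind_exists q.parts hy0)).1
    have hnot : op y * 2 ^ m ∉ q.parts := (Nat.find_spec (gfind_exists q.parts hy0)).2
    have hmid : ∀ j, ex y < j → j < m → op y * 2 ^ j ∈ q.parts := by
      intro j hj1 hj2
      by_contra hc
      exact Nat.find_min (gfind_exists q.parts hy0) hj2 ⟨hj1, hc⟩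
    have hqpos : ∀ u ∈ q.parts, 0 < u := fun u hu => q.parts_pos hu
    refine ⟨⟨⟨Gm q.parts y m, fun hu => G_pos hqpos hy0 _ hu,
      by rw [G_sum hy3 hy0 hkm hmid, q.parts_sum]⟩, y⟩, ?_, ?_⟩
    · -- membership in the sigma set
      rw [Finset.mem_sigma]
      constructor
      · exact mem_distincts_iff.2 (G_nodup hy3 h1 hy0 hkm hnot hmid)
      · rw [Finset.mem_filter]
        constructor
        · exact Multiset.mem_toFinset.2 (G_mem_y hy3 hy0 hkm)
        · refine ⟨op y * 2 ^ m, G_mem_w, ?_, op_of_odd (op_odd hy0) m⟩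
          calc y = op y * 2 ^ ex y := (op_mul_pow y).symm
          _ < op y * 2 ^ m := (chain_lt (op_pos hy0)).2 hkm
    · -- maps back to q
      apply Nat.Partition.ext
      rw [Fpart_parts]
      have hgy : y ∈ Gm q.parts y m := G_mem_y hy3 hy0 hkm
      have hE := ffind_exists n
        ⟨Gm q.parts y m, fun hu => G_pos hqpos hy0 _ hu,
          by rw [G_sum hy3 hy0 hkm hmid, q.parts_sum]⟩
        (z := y) hgy ⟨op y * 2 ^ m, G_mem_w, by
          calc y = op y * 2 ^ ex y := (op_mul_pow y).symm
          _ < op y * 2 ^ m := (chain_lt (op_pos hy0)).2 hkm,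
          op_of_odd (op_odd hy0) m⟩
      have hfind : Nat.find hE = m := by
        rw [Nat.find_eq_iff]
        refine ⟨⟨hkm, G_mem_w⟩, ?_⟩
        intro j hj ⟨hj1, hj2⟩
        exact G_not_mem_mid h1 hy0 hmid j hj1 hj hj2
      show Fm (Gm q.parts y m) y (Nat.find _) = q.parts
      rw [show (Nat.find _ : ℕ) = m from hfind]
      exact G_recover hy3 hy0 hmid
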